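/- arXiv:1305.5788 — 4 statements merged into one kernel-verified Lean document; each statement's English description precedes it below -/
import Mathlib

section
/- Let σ_3 : ℝ/ℤ → ℝ/ℤ be x ↦ 3x. If A ⊆ ℝ/ℤ is contained in the complement of the union of two disjoint closed arcs each of length at least 1/3, then the restriction of σ_3 to A is injective. -/
private lemma coe_add_intCast' (x : ℝ) (m : ℤ) :
    ((x + m : ℝ) : AddCircle (1:ℝ)) = (x : AddCircle (1:ℝ)) := by
  rw [AddCircle.coe_add]
  have : ((m : ℝ) : AddCircle (1:ℝ)) = 0 := by
    rw [AddCircle.coe_eq_zero_iff]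
    exact ⟨m, by simp⟩
  rw [this, add_zero]

private lemma arc_hits (t ℓ p : ℝ) (hℓ : 1/3 ≤ ℓ) :
    ∃ j : ℕ, j < 3 ∧
      ((p + j/3 : ℝ) : AddCircle (1:ℝ)) ∈
        (fun r : ℝ => (r : AddCircle (1:ℝ))) '' Set.Icc t (t + ℓ) := by
  set m' : ℤ := ⌈3 * (t - p)⌉ with hm'
  have h1 : 3 * (t - p) ≤ (m' : ℝ) := Int.le_ceil _
  have h2 : (m' : ℝ) < 3 * (t - p) + 1 := Int.ceil_lt_add_one _
  refine ⟨(m' % 3).toNat, ?_, ?_⟩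
  · have := Int.emod_lt_of_pos m' (by norm_num : (0:ℤ) < 3)
    omega
  · refine ⟨p + (m' % 3).toNat / 3 + (m' / 3 : ℤ), ?_, ?_⟩
    · have hq : ((m' % 3).toNat : ℝ) + 3 * ((m' / 3 : ℤ) : ℝ) = (m' : ℝ) := by
        have h3 : ((m' % 3).toNat : ℤ) = m' % 3 := by
          have := Int.emod_nonneg m' (by norm_num : (3:ℤ) ≠ 0)
          omega
        have : ((m' % 3).toNat : ℤ) + 3 * (m' / 3) = m' := by omega
        exact_mod_cast congrArg (fun z : ℤ => (z : ℝ)) this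
      constructor
      · nlinarith
      · nlinarith
    · simp only
      rw [← coe_add_intCast' (p + (m' % 3).toNat / 3) (m' / 3)]

/-- If `A ⊆ ℝ/ℤ` avoids two disjoint closed arcs each of length at least `1/3`,
then the tripling map `σ_3 : x ↦ 3x` is injective on `A`. -/
theorem sigma3_injOn_complement_of_two_arcs (t₁ ℓ₁ t₂ ℓ₂ : ℝ)
    (h₁ : 1/3 ≤ ℓ₁) (h₂ : 1/3 ≤ ℓ₂)
    (hdisj : Disjoint ((fun r : ℝ => (r : AddCircle (1:ℝ))) '' Set.Icc t₁ (t₁ + ℓ₁))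
      ((fun r : ℝ => (r : AddCircle (1:ℝ))) '' Set.Icc t₂ (t₂ + ℓ₂)))
    (A : Set (AddCircle (1:ℝ)))
    (hA : A ⊆ (((fun r : ℝ => (r : AddCircle (1:ℝ))) '' Set.Icc t₁ (t₁ + ℓ₁)) ∪
      ((fun r : ℝ => (r : AddCircle (1:ℝ))) '' Set.Icc t₂ (t₂ + ℓ₂)))ᶜ) :
    Set.InjOn (fun x : AddCircle (1:ℝ) => 3 • x) A := by
  intro x hx y hy hxy
  obtain ⟨a, rfl⟩ := QuotientAddGroup.mk_surjective x
  obtain ⟨b, rfl⟩ := QuotientAddGroup.mk_surjective y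
  simp only at hxy
  have hxy' : ((3 * a : ℝ) : AddCircle (1:ℝ)) = ((3 * b : ℝ) : AddCircle (1:ℝ)) := by
    have ha : ((3 * a : ℝ) : AddCircle (1:ℝ)) = 3 • ((a:ℝ) : AddCircle (1:ℝ)) := by
      rw [← AddCircle.coe_nsmul]; norm_num
    have hb : ((3 * b : ℝ) : AddCircle (1:ℝ)) = 3 • ((b:ℝ) : AddCircle (1:ℝ)) := by
      rw [← AddCircle.coe_nsmul]; norm_num
    rw [ha, hb, hxy]
  rw [QuotientAddGroup.eq] at hxy'
  obtain ⟨k, hk⟩ := AddSubgroup.mem_zmultiples_iff.mp hxy'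
  have hk' : (k : ℝ) = 3 * b - 3 * a := by
    have := hk; simp only [zsmul_eq_mul, mul_one] at this; linarith [this]
  -- b = a + k/3
  have hb3 : b = a + (k : ℝ) / 3 := by linarith
  have hk3 : k = 3 * (k / 3) + k % 3 := by omega
  have hr : 0 ≤ k % 3 ∧ k % 3 < 3 := ⟨Int.emod_nonneg k (by norm_num), Int.emod_lt_of_pos k (by norm_num)⟩
  set r : ℕ := (k % 3).toNat with hrdef
  have hrk : ((r : ℤ) : ℝ) = (k : ℝ) - 3 * ((k / 3 : ℤ) : ℝ) := by
    have : (r : ℤ) = k - 3 * (k / 3) := by omega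
    exact_mod_cast congrArg (fun z : ℤ => (z : ℝ)) this
  have hcoe_b : ((b : ℝ) : AddCircle (1:ℝ)) = ((a + r / 3 : ℝ) : AddCircle (1:ℝ)) := by
    rw [← coe_add_intCast' (a + r / 3) (k / 3)]
    congr 1
    push_cast at hrk ⊢
    linarith
  by_cases hr0 : r = 0
  · rw [hcoe_b, hr0]; norm_num
  · exfalso
    have hrlt : r < 3 := by omega
    -- x = ↑a ∈ complement, y = ↑b = ↑(a + r/3) ∈ complement
    obtain ⟨j₁, hj₁3, hj₁⟩ := arc_hits t₁ ℓ₁ a h₁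
    obtain ⟨j₂, hj₂3, hj₂⟩ := arc_hits t₂ ℓ₂ a h₂
    have hxc := hA hx
    have hyc := hA hy
    simp only [Set.mem_compl_iff, Set.mem_union, not_or] at hxc hyc
    have hj₁0 : j₁ ≠ 0 := by
      rintro rfl
      exact hxc.1 (by simpa using hj₁)
    have hj₁r : j₁ ≠ r := by
      rintro rfl
      exact hyc.1 (by rwa [← hcoe_b] at hj₁)
    have hj₂0 : j₂ ≠ 0 := by
      rintro rfl
      exact hxc.2 (by simpa using hj₂)
    have hj₂r : j₂ ≠ r := by
      rintro rfl
      exact hyc.2 (by rwa [← hcoe_b] at hj₂)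
    have : j₁ = j₂ := by omega
    subst this
    exact Set.disjoint_left.mp hdisj hj₁ hj₂
end

section
/- Let σ_2 : ℝ/ℤ → ℝ/ℤ be x ↦ 2x, and let H be a closed half-circle (a closed arc of length 1/2). Then any two periodic orbits of σ_2 entirely contained in H coincide; i.e., H contains at most one periodic orbit of σ_2. -/
private lemma hc_bridge (u v : ℝ) : ((u : ℝ) : AddCircle (1:ℝ)) = v ↔ ∃ j : ℤ, v = u + j := by
  constructor
  · intro h
    have : ((v - u : ℝ) : AddCircle (1:ℝ)) = 0 := by
      rw [sub_eq_add_neg, AddCircle.coe_add, ← h, ← AddCircle.coe_add]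
      norm_num
    rw [AddCircle.coe_eq_zero_iff] at this
    obtain ⟨j, hj⟩ := this
    rw [zsmul_eq_mul, mul_one] at hj
    exact ⟨j, by linarith⟩
  · rintro ⟨j, rfl⟩
    rw [AddCircle.coe_add (p := (1:ℝ)) u j]
    have : (((j:ℝ)):AddCircle (1:ℝ)) = 0 := by
      rw [AddCircle.coe_eq_zero_iff]; exact ⟨j, by simp⟩
    rw [this, add_zero]

private lemma hc_smul2 (u : ℝ) : (2:ℕ) • ((u:ℝ) : AddCircle (1:ℝ)) = ((2*u : ℝ) : AddCircle (1:ℝ)) := by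
  rw [two_smul, ← AddCircle.coe_add]; ring_nf

private lemma hc_lift_unique {t u v : ℝ} (hu : u ∈ Set.Icc t (t+1/2))
    (hv : v ∈ Set.Icc t (t+1/2)) (h : ((u : ℝ) : AddCircle (1:ℝ)) = v) : u = v := by
  obtain ⟨j, hj⟩ := (hc_bridge u v).1 h
  obtain ⟨hu1, hu2⟩ := hu
  obtain ⟨hv1, hv2⟩ := hv
  have h1 : (-1 : ℝ) < j := by linarith
  have h2 : (j : ℝ) < 1 := by linarith
  have h1' : (-1 : ℤ) < j := by exact_mod_cast h1
  have h2' : j < 1 := by exact_mod_cast h2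
  have : j = 0 := by omega
  rw [this] at hj; push_cast at hj; linarith

private lemma hc_orbit_sub {α : Type*} (f : α → α) (x y : α) (n : ℕ) (hn : 1 ≤ n)
    (hx : f^[n] x = x) (i j : ℕ) (hij : f^[i] x = f^[j] y) (k : ℕ) :
    ∃ k', f^[k'] y = f^[k] x := by
  have hper : f^[n*i] x = x := (Function.IsPeriodicPt.mul_const hx i : _)
  refine ⟨(k + (n*i - i)) + j, ?_⟩
  rw [Function.iterate_add_apply, ← hij, ← Function.iterate_add_apply]
  have he : k + (n*i - i) + i = k + n*i := by
    have : i ≤ n*i := Nat.le_mul_of_pos_left i hn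
    omega
  rw [he, Function.iterate_add_apply, hper]



private lemma hc_core (t : ℝ) (W : Finset ℝ) (hW : ∀ w ∈ W, t ≤ w ∧ w ≤ t + 1/2)
    (τ : ℝ → ℝ) (hτmem : ∀ w ∈ W, τ w ∈ W)
    (hτc : ∀ w ∈ W, ∃ j : ℤ, τ w = 2*w + j)
    (hsurj : ∀ w ∈ W, ∃ d ∈ W, τ d = w)
    (hinj : ∀ a ∈ W, ∀ b ∈ W, τ a = τ b → a = b)
    (b0 : ℝ) (hb0 : b0 ∈ W) (M : ℕ) (hM : 1 ≤ M) (hper : τ^[M] b0 = b0)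
    (hmax : ∀ s : ℕ, τ^[s] b0 ≠ W.max' ⟨b0, hb0⟩) : False := by
  have hne : W.Nonempty := ⟨b0, hb0⟩
  set mx := W.max' hne with hmx
  set mn := W.min' hne with hmn
  set γ : ℝ → ℝ := fun a =>
    if h : (W.filter (fun c => a < c)).Nonempty
    then (W.filter (fun c => a < c)).min' h - a else mn + 1 - a with hγ
  have γpos : ∀ a ∈ W, 0 < γ a := by
    intro a ha
    by_cases h : (W.filter (fun c => a < c)).Nonempty
    · rw [hγ]; simp only [dif_pos h]
      have := Finset.min'_mem _ h
      rw [Finset.mem_filter] at this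
      linarith [this.2]
    · rw [hγ]; simp only [dif_neg h]
      have h1 := (hW a ha).2
      have h2 := (hW mn (Finset.min'_mem _ hne)).1
      linarith
  -- key doubling step
  have F4 : ∀ a ∈ W, a ≠ mx → γ (τ a) = 2 * γ a := by
    intro a haW hamx
    have hfa : (W.filter (fun c => a < c)).Nonempty := by
      refine ⟨mx, ?_⟩
      rw [Finset.mem_filter]
      exact ⟨Finset.max'_mem _ hne, lt_of_le_of_ne (Finset.le_max' _ _ haW) hamx⟩
    set b := (W.filter (fun c => a < c)).min' hfa with hbdef
    have hbmem := Finset.min'_mem _ hfa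
    rw [Finset.mem_filter] at hbmem
    have hbW : b ∈ W := hbmem.1
    have hab : a < b := hbmem.2
    have hnogap : ∀ c ∈ W, a < c → b ≤ c := by
      intro c hc hac
      exact Finset.min'_le _ _ (Finset.mem_filter.mpr ⟨hc, hac⟩)
    have hγa : γ a = b - a := by rw [hγ]; simp only [dif_pos hfa]; rfl
    obtain ⟨p, hp⟩ := hτc a haW
    obtain ⟨q, hq⟩ := hτc b hbW
    have hτaW : τ a ∈ W := hτmem a haW
    have hτbW : τ b ∈ W := hτmem b hbW
    obtain ⟨hta1, hta2⟩ := hW _ hτaW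
    obtain ⟨htb1, htb2⟩ := hW _ hτbW
    obtain ⟨haI1, haI2⟩ := hW a haW
    obtain ⟨hbI1, hbI2⟩ := hW b hbW
    -- no W point in the doubled gap (mod 1)
    have key : ∀ c ∈ W, ∀ i : ℤ, ¬ (2*a + i < c ∧ c < 2*b + i) := by
      rintro c hc i ⟨h1, h2⟩
      obtain ⟨d, hdW, hdc⟩ := hsurj c hc
      obtain ⟨r, hr⟩ := hτc d hdW
      obtain ⟨hdI1, hdI2⟩ := hW d hdW
      rw [hdc] at hr
      -- 2a + i < 2d + r < 2b + i
      rcases Int.even_or_odd (i - r) with ⟨v, hv⟩ | ⟨v, hv⟩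
      · have hv' : (i : ℝ) - r = v + v := by exact_mod_cast congrArg (Int.cast : ℤ → ℝ) hv
        have hd1 : a + v < d := by linarith
        have hd2 : d < b + v := by linarith
        rcases lt_trichotomy v 0 with h | h | h
        · have : (v : ℝ) ≤ -1 := by exact_mod_cast (by omega : v ≤ -1)
          linarith
        · rw [h] at hd1 hd2
          push_cast at hd1 hd2
          have := hnogap d hdW (by linarith)
          linarith
        · have : (1 : ℝ) ≤ v := by exact_mod_cast h
          linarith
      · have hv' : (i : ℝ) - r = 2*v + 1 := by exact_mod_cast congrArg (Int.cast : ℤ → ℝ) hv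
        have hd1 : a + v + 1/2 < d := by linarith
        have hd2 : d < b + v + 1/2 := by linarith
        rcases lt_or_ge v 0 with h | h
        · have : (v : ℝ) ≤ -1 := by exact_mod_cast (by omega : v ≤ -1)
          linarith
        · have : (0 : ℝ) ≤ v := by exact_mod_cast h
          linarith
    -- q = p or q = p - 1
    have hqp : q = p ∨ q = p - 1 := by
      have e1 : τ b - τ a = 2*(b-a) + ((q : ℝ) - p) := by rw [hp, hq]; ring
      have e2 : τ b - τ a ≤ 1/2 := by linarith
      have e3 : -(1/2) ≤ τ b - τ a := by linarith
      have e4 : (q : ℝ) - p < 1 := by linarith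
      have e5 : (-2 : ℝ) < (q : ℝ) - p := by linarith
      have e4' : q - p < 1 := by exact_mod_cast e4
      have e5' : (-2 : ℤ) < q - p := by exact_mod_cast e5
      omega
    rcases hqp with rfl | rfl
    · -- no wrap: τ b is the successor of τ a
      have htab : τ a < τ b := by rw [hp, hq]; push_cast; linarith
      have hfτ : (W.filter (fun c => τ a < c)).Nonempty :=
        ⟨τ b, Finset.mem_filter.mpr ⟨hτbW, htab⟩⟩
      have hmin : (W.filter (fun c => τ a < c)).min' hfτ = τ b := by
        apply le_antisymm
        · exact Finset.min'_le _ _ (Finset.mem_filter.mpr ⟨hτbW, htab⟩)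
        · set c := (W.filter (fun c => τ a < c)).min' hfτ with hcdef
          have hcmem := Finset.min'_mem _ hfτ
          rw [Finset.mem_filter] at hcmem
          by_contra hlt
          push_neg at hlt
          exact key c hcmem.1 q ⟨by rw [← hp]; exact hcmem.2, by rw [← hq]; exact hlt⟩
      rw [hγ]
      simp only [dif_pos hfτ, dif_pos hfa]
      rw [hmin, hp, hq]
      push_cast
      ring
    · -- wrap: τ a = mx, τ b = mn
      have htab : τ b < τ a := by
        have hne' : τ a ≠ τ b := fun h => absurd (hinj a haW b hbW h) (ne_of_lt hab)
        have : τ b - τ a = 2*(b-a) - 1 := by rw [hp, hq]; push_cast; ring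
        have hba : b - a ≤ 1/2 := by linarith
        rcases lt_or_eq_of_le hba with h | h
        · linarith
        · exfalso; apply hne'; linarith
      -- τ a is above everything
      have habove : ∀ c ∈ W, ¬ (τ a < c) := by
        intro c hc hlt
        obtain ⟨hcI1, hcI2⟩ := hW c hc
        refine key c hc p ⟨by rw [← hp]; exact hlt, ?_⟩
        rw [hq] at htb1
        push_cast at htb1 ⊢
        linarith
      -- τ b is below everything
      have hbelow : ∀ c ∈ W, τ b ≤ c := by
        intro c hc
        by_contra hlt
        push_neg at hlt
        obtain ⟨hcI1, hcI2⟩ := hW c hc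
        refine key c hc (p - 1) ⟨?_, ?_⟩
        · push_cast; rw [hp] at hta2; linarith
        · push_cast; rw [hq] at hlt; push_cast at hlt; linarith
      have hempty : ¬ (W.filter (fun c => τ a < c)).Nonempty := by
        rintro ⟨c, hc⟩
        rw [Finset.mem_filter] at hc
        exact habove c hc.1 hc.2
      have hmneq : mn = τ b := le_antisymm (Finset.min'_le _ _ hτbW)
        (Finset.le_min' _ _ _ (fun c hc => hbelow c hc))
      rw [hγ]
      simp only [dif_neg hempty, dif_pos hfa]
      rw [hmneq, hp, hq]
      push_cast
      ring
  -- iterate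
  have horb : ∀ s : ℕ, τ^[s] b0 ∈ W := by
    intro s
    induction s with
    | zero => exact hb0
    | succ s ih => rw [Function.iterate_succ_apply']; exact hτmem _ ih
  have hgam : ∀ s : ℕ, γ (τ^[s] b0) = 2^s * γ b0 := by
    intro s
    induction s with
    | zero => simp
    | succ s ih =>
      rw [Function.iterate_succ_apply', F4 _ (horb s) (hmax s), ih]
      ring
  have hfin := hgam M
  rw [hper] at hfin
  have h2M : (2:ℝ)^1 ≤ 2^M := by
    apply pow_le_pow_right₀ (by norm_num) hM
  have hγb0 := γpos b0 hb0
  nlinarith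

private lemma hc_coreApply (t : ℝ) (W : Finset ℝ) (hW : ∀ w ∈ W, t ≤ w ∧ w ≤ t + 1/2)
    (τ : ℝ → ℝ) (hτmem : ∀ w ∈ W, τ w ∈ W)
    (hτc : ∀ w ∈ W, ∃ j : ℤ, τ w = 2*w + j)
    (hsurj : ∀ w ∈ W, ∃ d ∈ W, τ d = w)
    (hinj : ∀ a ∈ W, ∀ b ∈ W, τ a = τ b → a = b)
    (hlink : ∀ w ∈ W, ((τ w : ℝ) : AddCircle (1:ℝ)) = 2 • ((w : ℝ) : AddCircle (1:ℝ)))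
    (z : AddCircle (1:ℝ)) (P : ℕ) (hP : 1 ≤ P)
    (hz : (fun z : AddCircle (1:ℝ) => 2 • z)^[P] z = z)
    (b0 : ℝ) (hb0 : b0 ∈ W) (hb0c : ((b0 : ℝ) : AddCircle (1:ℝ)) = z)
    (hnemx : ∀ s : ℕ, (fun z : AddCircle (1:ℝ) => 2 • z)^[s] z ≠
      ((W.max' ⟨b0, hb0⟩ : ℝ) : AddCircle (1:ℝ))) : False := by
  set σ : AddCircle (1:ℝ) → AddCircle (1:ℝ) := fun z => 2 • z with hσ
  have horb : ∀ s : ℕ, τ^[s] b0 ∈ W ∧ ((τ^[s] b0 : ℝ) : AddCircle (1:ℝ)) = σ^[s] z := by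
    intro s
    induction s with
    | zero => exact ⟨hb0, hb0c⟩
    | succ s ih =>
      constructor
      · rw [Function.iterate_succ_apply']; exact hτmem _ ih.1
      · rw [Function.iterate_succ_apply', Function.iterate_succ_apply',
          hlink _ ih.1, ih.2]
  refine hc_core t W hW τ hτmem hτc hsurj hinj b0 hb0 P hP ?_ ?_
  · have h1 := (horb P).2
    rw [hz] at h1
    exact hc_lift_unique
      (Set.mem_Icc.mpr (hW _ (horb P).1)) (Set.mem_Icc.mpr (hW _ hb0)) (h1.trans hb0c.symm)
  · intro s heq
    exact hnemx s (((horb s).2.symm.trans (by rw [heq])))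

private lemma hc_noTwo (t : ℝ) (x y : AddCircle (1:ℝ))
    (n m : ℕ) (hn : 1 ≤ n) (hm : 1 ≤ m)
    (hx : (fun z : AddCircle (1:ℝ) => 2 • z)^[n] x = x)
    (hy : (fun z : AddCircle (1:ℝ) => 2 • z)^[m] y = y)
    (hxH : ∀ k, (fun z : AddCircle (1:ℝ) => 2 • z)^[k] x ∈
      (fun r : ℝ => (r : AddCircle (1:ℝ))) '' Set.Icc t (t + 1/2))
    (hyH : ∀ k, (fun z : AddCircle (1:ℝ) => 2 • z)^[k] y ∈
      (fun r : ℝ => (r : AddCircle (1:ℝ))) '' Set.Icc t (t + 1/2))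
    (hsep : ∀ i j, (fun z : AddCircle (1:ℝ) => 2 • z)^[i] x ≠
      (fun z : AddCircle (1:ℝ) => 2 • z)^[j] y) : False := by
  set σ : AddCircle (1:ℝ) → AddCircle (1:ℝ) := fun z => 2 • z with hσ
  -- the union of the two orbits
  set O : Set (AddCircle (1:ℝ)) :=
    {z | ∃ k, σ^[k] x = z} ∪ {z | ∃ k, σ^[k] y = z} with hO
  have hxmod : ∀ k, σ^[k] x = σ^[k % n] x := fun k =>
    (Function.IsPeriodicPt.iterate_mod_apply (show Function.IsPeriodicPt σ n x from hx) k).symm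
  have hymod : ∀ k, σ^[k] y = σ^[k % m] y := fun k =>
    (Function.IsPeriodicPt.iterate_mod_apply (show Function.IsPeriodicPt σ m y from hy) k).symm
  have hOfin : O.Finite := by
    apply Set.Finite.union
    · apply Set.Finite.subset (Set.Finite.image (fun k => σ^[k] x) (Set.finite_Iio n))
      rintro z ⟨k, rfl⟩
      exact ⟨k % n, Nat.mod_lt _ hn, (hxmod k).symm⟩
    · apply Set.Finite.subset (Set.Finite.image (fun k => σ^[k] y) (Set.finite_Iio m))
      rintro z ⟨k, rfl⟩
      exact ⟨k % m, Nat.mod_lt _ hm, (hymod k).symm⟩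
  -- lifts of orbit points
  set WS : Set ℝ := {r | r ∈ Set.Icc t (t+1/2) ∧ ((r:ℝ) : AddCircle (1:ℝ)) ∈ O} with hWS
  have hWSfin : WS.Finite := by
    apply Set.Finite.of_finite_image (f := fun r : ℝ => ((r:ℝ) : AddCircle (1:ℝ)))
    · exact hOfin.subset (by rintro z ⟨r, hr, rfl⟩; exact hr.2)
    · intro u hu v hv huv
      exact hc_lift_unique hu.1 hv.1 huv
  set W : Finset ℝ := hWSfin.toFinset with hWdef
  have hWiff : ∀ w : ℝ, w ∈ W ↔ (w ∈ Set.Icc t (t+1/2) ∧ ((w:ℝ) : AddCircle (1:ℝ)) ∈ O) :=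
    fun w => Set.Finite.mem_toFinset _
  have hWIcc : ∀ w ∈ W, t ≤ w ∧ w ≤ t + 1/2 := by
    intro w hw
    exact Set.mem_Icc.mp ((hWiff w).1 hw).1
  -- every orbit point has a lift in W
  have hlift : ∀ z ∈ O, ∃ r, r ∈ W ∧ ((r:ℝ) : AddCircle (1:ℝ)) = z := by
    rintro z (⟨k, rfl⟩ | ⟨k, rfl⟩)
    · obtain ⟨r, hr1, hr2⟩ := hxH k
      have hr2' : ((r:ℝ) : AddCircle (1:ℝ)) = σ^[k] x := hr2
      exact ⟨r, (hWiff r).2 ⟨hr1, by rw [hr2']; exact Or.inl ⟨k, rfl⟩⟩, hr2'⟩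
    · obtain ⟨r, hr1, hr2⟩ := hyH k
      have hr2' : ((r:ℝ) : AddCircle (1:ℝ)) = σ^[k] y := hr2
      exact ⟨r, (hWiff r).2 ⟨hr1, by rw [hr2']; exact Or.inr ⟨k, rfl⟩⟩, hr2'⟩
  -- O is invariant under doubling
  have hOσ : ∀ z ∈ O, 2 • z ∈ O := by
    rintro z (⟨k, rfl⟩ | ⟨k, rfl⟩)
    · exact Or.inl ⟨k+1, by rw [Function.iterate_succ_apply']⟩
    · exact Or.inr ⟨k+1, by rw [Function.iterate_succ_apply']⟩
  -- the induced map on lifts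
  set τ : ℝ → ℝ := fun w =>
    if h : ∃ v, v ∈ W ∧ ((v:ℝ) : AddCircle (1:ℝ)) = 2 • ((w:ℝ) : AddCircle (1:ℝ))
    then h.choose else 0 with hτdef
  have htau : ∀ w ∈ W, τ w ∈ W ∧ ((τ w : ℝ) : AddCircle (1:ℝ)) = 2 • ((w:ℝ) : AddCircle (1:ℝ)) := by
    intro w hw
    have hex : ∃ v, v ∈ W ∧ ((v:ℝ) : AddCircle (1:ℝ)) = 2 • ((w:ℝ) : AddCircle (1:ℝ)) := by
      obtain ⟨r, hr1, hr2⟩ := hlift _ (hOσ _ ((hWiff w).1 hw).2)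
      exact ⟨r, hr1, hr2⟩
    rw [hτdef]
    simp only [dif_pos hex]
    exact hex.choose_spec
  have hτmem : ∀ w ∈ W, τ w ∈ W := fun w hw => (htau w hw).1
  have hlink : ∀ w ∈ W, ((τ w : ℝ) : AddCircle (1:ℝ)) = 2 • ((w:ℝ) : AddCircle (1:ℝ)) :=
    fun w hw => (htau w hw).2
  have hτc : ∀ w ∈ W, ∃ j : ℤ, τ w = 2*w + j := by
    intro w hw
    have h1 : ((2*w : ℝ) : AddCircle (1:ℝ)) = τ w := by
      rw [← hc_smul2 w, ← hlink w hw]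
    exact (hc_bridge (2*w) (τ w)).1 h1
  -- surjectivity
  have hsurj : ∀ w ∈ W, ∃ d ∈ W, τ d = w := by
    intro w hw
    have hwO : ((w:ℝ) : AddCircle (1:ℝ)) ∈ O := ((hWiff w).1 hw).2
    have hpred : ∃ u ∈ O, 2 • u = ((w:ℝ) : AddCircle (1:ℝ)) := by
      rcases hwO with ⟨k, hk⟩ | ⟨k, hk⟩
      · refine ⟨σ^[k + n - 1] x, Or.inl ⟨k + n - 1, rfl⟩, ?_⟩
        have h2 : (2:ℕ) • σ^[k + n - 1] x = σ^[k + n - 1 + 1] x := by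
          rw [Function.iterate_succ_apply']
        rw [h2, show k + n - 1 + 1 = k + n by omega, Function.iterate_add_apply, hx, hk]
      · refine ⟨σ^[k + m - 1] y, Or.inr ⟨k + m - 1, rfl⟩, ?_⟩
        have h2 : (2:ℕ) • σ^[k + m - 1] y = σ^[k + m - 1 + 1] y := by
          rw [Function.iterate_succ_apply']
        rw [h2, show k + m - 1 + 1 = k + m by omega, Function.iterate_add_apply, hy, hk]
    obtain ⟨u, huO, huw⟩ := hpred
    obtain ⟨d, hdW, hdc⟩ := hlift u huO
    refine ⟨d, hdW, ?_⟩
    have h3 : ((τ d : ℝ) : AddCircle (1:ℝ)) = ((w:ℝ) : AddCircle (1:ℝ)) := by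
      rw [hlink d hdW, hdc, huw]
    exact hc_lift_unique (Set.mem_Icc.mpr (hWIcc _ (hτmem d hdW)))
      (Set.mem_Icc.mpr (hWIcc _ hw)) h3
  -- σ^[n*m] fixes every point of O
  have hNx : σ^[n*m] x = x := (Function.IsPeriodicPt.mul_const hx m : _)
  have hNy : σ^[n*m] y = y := by
    have := (Function.IsPeriodicPt.mul_const hy n : σ^[m*n] y = y)
    rwa [Nat.mul_comm] at this
  have hfixO : ∀ z ∈ O, σ^[n*m] z = z := by
    rintro z (⟨k, rfl⟩ | ⟨k, rfl⟩)
    · rw [← Function.iterate_add_apply, Nat.add_comm, Function.iterate_add_apply, hNx]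
    · rw [← Function.iterate_add_apply, Nat.add_comm, Function.iterate_add_apply, hNy]
  -- injectivity
  have hinj : ∀ a ∈ W, ∀ b ∈ W, τ a = τ b → a = b := by
    intro a ha b hb hab
    have h2 : (2:ℕ) • ((a:ℝ) : AddCircle (1:ℝ)) = (2:ℕ) • ((b:ℝ) : AddCircle (1:ℝ)) := by
      rw [← hlink a ha, ← hlink b hb, hab]
    have hstep : ∀ c : ℝ, c ∈ W →
        σ^[n*m - 1] ((2:ℕ) • ((c:ℝ) : AddCircle (1:ℝ))) = ((c:ℝ) : AddCircle (1:ℝ)) := by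
      intro c hc
      have hcO := ((hWiff c).1 hc).2
      have h4 : σ ((c:ℝ) : AddCircle (1:ℝ)) = (2:ℕ) • ((c:ℝ) : AddCircle (1:ℝ)) := rfl
      have h5 : 1 ≤ n*m := Nat.one_le_iff_ne_zero.mpr (Nat.mul_ne_zero (by omega) (by omega))
      have h8 : σ^[n*m - 1 + 1] ((c:ℝ) : AddCircle (1:ℝ)) = ((c:ℝ) : AddCircle (1:ℝ)) := by
        rw [show n*m - 1 + 1 = n*m by omega]
        exact hfixO _ hcO
      rw [Function.iterate_succ_apply, h4] at h8
      exact h8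
    have h6 : ((a:ℝ) : AddCircle (1:ℝ)) = ((b:ℝ) : AddCircle (1:ℝ)) := by
      rw [← hstep a ha, ← hstep b hb, h2]
    exact hc_lift_unique (Set.mem_Icc.mpr (hWIcc _ ha)) (Set.mem_Icc.mpr (hWIcc _ hb)) h6
  -- base points
  obtain ⟨bx, hbxW, hbxc⟩ := hlift x (Or.inl ⟨0, rfl⟩)
  obtain ⟨by', hbyW, hbyc⟩ := hlift y (Or.inr ⟨0, rfl⟩)
  have hNge : 1 ≤ n*m := Nat.one_le_iff_ne_zero.mpr (Nat.mul_ne_zero (by omega) (by omega))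
  -- where does the max lift come from?
  have hmxW : W.max' ⟨by', hbyW⟩ ∈ W := Finset.max'_mem _ _
  have hmxO := ((hWiff _).1 hmxW).2
  rcases hmxO with ⟨k, hk⟩ | ⟨k, hk⟩
  · -- max is on the x-orbit: run the argument along the y-orbit
    refine hc_coreApply t W hWIcc τ hτmem hτc hsurj hinj hlink y (n*m) hNge hNy
      by' hbyW hbyc ?_
    intro s heq
    exact hsep k s (hk.trans heq.symm)
  · -- max is on the y-orbit: run the argument along the x-orbit
    refine hc_coreApply t W hWIcc τ hτmem hτc hsurj hinj hlink x (n*m) hNge hNx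
      bx hbxW hbxc ?_
    intro s heq
    have hmx_eq : W.max' ⟨bx, hbxW⟩ = W.max' ⟨by', hbyW⟩ := rfl
    rw [hmx_eq] at heq
    exact hsep s k (heq.trans hk.symm)


/-- A closed half-circle contains at most one periodic orbit of the doubling map:
any two periodic orbits of `σ_2` entirely contained in a closed arc of length `1/2`
coincide. -/
theorem half_circle_unique_periodic_orbit (t : ℝ) (x y : AddCircle (1:ℝ))
    (n m : ℕ) (hn : 1 ≤ n) (hm : 1 ≤ m)
    (hx : (fun z : AddCircle (1:ℝ) => 2 • z)^[n] x = x)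
    (hy : (fun z : AddCircle (1:ℝ) => 2 • z)^[m] y = y)
    (hxH : ∀ k, (fun z : AddCircle (1:ℝ) => 2 • z)^[k] x ∈
      (fun r : ℝ => (r : AddCircle (1:ℝ))) '' Set.Icc t (t + 1/2))
    (hyH : ∀ k, (fun z : AddCircle (1:ℝ) => 2 • z)^[k] y ∈
      (fun r : ℝ => (r : AddCircle (1:ℝ))) '' Set.Icc t (t + 1/2)) :
    {z | ∃ k, (fun z : AddCircle (1:ℝ) => 2 • z)^[k] x = z} =
      {z | ∃ k, (fun z : AddCircle (1:ℝ) => 2 • z)^[k] y = z} := by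
  by_cases hmeet : ∃ i j, (fun z : AddCircle (1:ℝ) => 2 • z)^[i] x =
      (fun z : AddCircle (1:ℝ) => 2 • z)^[j] y
  · obtain ⟨i, j, hij⟩ := hmeet
    ext z
    simp only [Set.mem_setOf_eq]
    constructor
    · rintro ⟨k, rfl⟩
      exact hc_orbit_sub _ x y n hn hx i j hij k
    · rintro ⟨k, rfl⟩
      exact hc_orbit_sub _ y x m hm hy j i hij.symm k
  · push_neg at hmeet
    exact (hc_noTwo t x y n m hn hm hx hy hxH hyH hmeet).elim
end

section
/- Let σ_2 : ℝ/ℤ → ℝ/ℤ be x ↦ 2x, and let P be a finite σ_2-periodic orbit contained in a closed half-circle. Then P is either the fixed point {0}, or the 2-cycle {1/3, 2/3}, or more generally σ_2 acts on P = {x_1 < x_2 < ⋯ < x_n} (cyclic order) as a combinatorial rotation: there exists p with σ_2(x_i) = x_{i+p (mod n)} for all i. -/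
private lemma addCircle_coe_eq_coe (a b : ℝ) :
    ((a : AddCircle (1:ℝ)) = (b : AddCircle (1:ℝ))) ↔ ∃ k : ℤ, b - a = k := by
  rw [QuotientAddGroup.eq_iff_sub_mem]
  simp only [AddSubgroup.mem_zmultiples_iff, zsmul_eq_mul, mul_one]
  constructor
  · rintro ⟨k, hk⟩; exact ⟨-k, by push_cast; linarith⟩
  · rintro ⟨k, hk⟩; exact ⟨-k, by push_cast; linarith⟩

private lemma addCircle_smul_coe (a : ℝ) :
    (2 : ℕ) • ((a : ℝ) : AddCircle (1:ℝ)) = ((2 * a : ℝ) : AddCircle (1:ℝ)) := by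
  rw [two_smul, two_mul, ← QuotientAddGroup.mk_add]

/-- Thurston: a periodic orbit of the doubling map contained in a closed half-circle
is acted on by `σ_2` as a combinatorial rotation: listing the orbit in circular
order as `x_1 < ⋯ < x_m`, there is `p` with `σ_2(x_i) = x_{i+p (mod m)}`. -/
theorem doubling_orbit_in_half_circle_is_rotation (m : ℕ) (hm : 0 < m)
    (t : ℝ) (x : Fin m → ℝ) (hmono : StrictMono x)
    (hhalf : ∀ i, x i ∈ Set.Icc t (t + 1/2))
    (horbit : ∃ z : AddCircle (1:ℝ), ∃ n : ℕ, 0 < n ∧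
      (fun w : AddCircle (1:ℝ) => 2 • w)^[n] z = z ∧
      Set.range (fun i : Fin m => ((x i : ℝ) : AddCircle (1:ℝ))) =
        {w | ∃ k : ℕ, (fun w : AddCircle (1:ℝ) => 2 • w)^[k] z = w}) :
    ∃ p : Fin m, ∀ i : Fin m,
      2 • ((x i : ℝ) : AddCircle (1:ℝ)) = ((x (i + p) : ℝ) : AddCircle (1:ℝ)) := by
  obtain ⟨m', rfl⟩ : ∃ m'', m = m'' + 1 := ⟨m - 1, (Nat.succ_pred_eq_of_pos hm).symm⟩
  obtain ⟨z, n, hn, hzn, hP⟩ := horbit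
  set σ : AddCircle (1:ℝ) → AddCircle (1:ℝ) := fun w => 2 • w with hσdef
  set y : Fin (m'+1) → AddCircle (1:ℝ) := fun i => ((x i : ℝ) : AddCircle (1:ℝ)) with hydef
  -- injectivity of y
  have hyne : ∀ i j : Fin (m'+1), i < j → y i ≠ y j := by
    intro i j hij hyij
    obtain ⟨k, hk⟩ := (addCircle_coe_eq_coe _ _).mp hyij
    have h1 : 0 < x j - x i := sub_pos.mpr (hmono hij)
    have h2 : x j - x i ≤ 1/2 := by
      have := (hhalf i).1; have := (hhalf j).2; linarith
    have hk0 : (0:ℤ) < k := by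
      have : (0:ℝ) < (k:ℝ) := by rw [← hk]; exact h1
      exact_mod_cast this
    have hk1 : (1:ℝ) ≤ (k:ℝ) := by exact_mod_cast hk0
    linarith [hk, hk1, h2]
  have hyinj : Function.Injective y := by
    intro i j hij
    rcases lt_trichotomy i j with h | h | h
    · exact absurd hij (hyne i j h)
    · exact h
    · exact absurd hij.symm (hyne j i h)
  -- the permutation
  have hmem : ∀ i : Fin (m'+1), ∃ j : Fin (m'+1), y j = σ (y i) := by
    intro i
    have h1 : y i ∈ Set.range y := Set.mem_range_self i
    rw [hP] at h1
    obtain ⟨k, hk⟩ := h1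
    have h2 : σ (y i) ∈ {w | ∃ k : ℕ, σ^[k] z = w} :=
      ⟨k + 1, by rw [Function.iterate_succ_apply', hk]⟩
    rw [← hP] at h2
    obtain ⟨j, hj⟩ := h2
    exact ⟨j, hj⟩
  set π : Fin (m'+1) → Fin (m'+1) := fun i => (hmem i).choose with hπdef
  have hπ : ∀ i, y (π i) = σ (y i) := fun i => (hmem i).choose_spec
  have hπsurj : Function.Surjective π := by
    intro j
    have h1 : y j ∈ Set.range y := Set.mem_range_self j
    rw [hP] at h1
    obtain ⟨k, hk⟩ := h1
    have h2 : ∃ w, (∃ k : ℕ, σ^[k] z = w) ∧ σ w = y j := by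
      cases k with
      | zero =>
          refine ⟨σ^[n-1] z, ⟨n-1, rfl⟩, ?_⟩
          have h3 : σ^[n-1+1] z = y j := by
            have hn1 : n - 1 + 1 = n := by omega
            rw [hn1, hzn]; simpa using hk
          rw [← h3, Function.iterate_succ_apply']
      | succ k' =>
          exact ⟨σ^[k'] z, ⟨k', rfl⟩, by rw [← Function.iterate_succ_apply' σ k' z]; exact hk⟩
    obtain ⟨w, hw1, hw2⟩ := h2
    have : w ∈ Set.range y := by rw [hP]; exact hw1
    obtain ⟨i, hi⟩ := this
    refine ⟨i, hyinj ?_⟩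
    rw [hπ i, hi, hw2]
  have hπinj : Function.Injective π := Finite.injective_iff_surjective.mpr hπsurj
  -- integer winding numbers
  have hKex : ∀ i, ∃ k : ℤ, x (π i) - 2 * x i = k := by
    intro i
    have h := hπ i
    rw [hσdef] at h
    simp only [hydef] at h
    rw [addCircle_smul_coe] at h
    exact (addCircle_coe_eq_coe _ _).mp h.symm
  set K : Fin (m'+1) → ℤ := fun i => (hKex i).choose with hKdef
  have hK : ∀ i, x (π i) = 2 * x i + K i := by
    intro i
    have := (hKex i).choose_spec
    linarith [this]
  -- the diameter is < 1/2
  have hlast : ∀ s : Fin (m'+1), x 0 ≤ x s ∧ x s ≤ x (Fin.last m') :=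
    fun s => ⟨hmono.monotone (Fin.zero_le s), hmono.monotone (Fin.le_last s)⟩
  have hD2 : x (Fin.last m') - x 0 ≤ 1/2 := by
    have := (hhalf 0).1; have := (hhalf (Fin.last m')).2; linarith
  have hD : x (Fin.last m') - x 0 < 1/2 := by
    rcases lt_or_eq_of_le hD2 with h | h
    · exact h
    · exfalso
      have hcirc : y (π (Fin.last m')) = y (π 0) := by
        rw [hπ, hπ, hσdef]
        simp only [hydef]
        rw [addCircle_smul_coe, addCircle_smul_coe]
        exact ((addCircle_coe_eq_coe _ _).mpr ⟨1, by push_cast; linarith⟩).symm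
      have h1 : Fin.last m' = 0 := hπinj (hyinj hcirc)
      have h2 : x (Fin.last m') = x 0 := by rw [h1]
      linarith
  -- pair lemma
  have hpair : ∀ i j : Fin (m'+1), i < j →
      (K j = K i ∧ π i < π j) ∨ (K j = K i - 1 ∧ π j < π i) := by
    intro i j hij
    have h1 : 0 < x j - x i := sub_pos.mpr (hmono hij)
    have h2 : x j - x i < 1/2 := by
      have := (hlast i).1; have := (hlast j).2; linarith
    have h3 : x (π j) - x (π i) < 1/2 := by
      have := (hlast (π i)).1; have := (hlast (π j)).2; linarith
    have h4 : -(1/2 : ℝ) < x (π j) - x (π i) := by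
      have := (hlast (π j)).1; have := (hlast (π i)).2; linarith
    have hKr : (K j : ℝ) - K i = (x (π j) - x (π i)) - 2 * (x j - x i) := by
      have := hK i; have := hK j; linarith
    have hrange : K j - K i = 0 ∨ K j - K i = -1 := by
      have hlow : (-2 : ℝ) < (K j : ℝ) - K i := by rw [hKr]; linarith
      have hhigh : (K j : ℝ) - K i < 1 := by rw [hKr]; linarith
      have hlow' : (-2 : ℤ) < K j - K i := by
        have : ((-2:ℤ):ℝ) < ((K j - K i : ℤ) : ℝ) := by push_cast; linarith
        exact_mod_cast this
      have hhigh' : K j - K i < (1 : ℤ) := by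
        have : ((K j - K i : ℤ):ℝ) < ((1:ℤ):ℝ) := by push_cast; linarith
        exact_mod_cast this
      omega
    rcases hrange with h | h
    · left
      have hKeq : K j = K i := by omega
      have hc : (K j : ℝ) = K i := by exact_mod_cast hKeq
      have hpos : x (π i) < x (π j) := by linarith [hKr, hc]
      exact ⟨hKeq, hmono.lt_iff_lt.mp hpos⟩
    · right
      have hKeq : K j = K i - 1 := by omega
      have hc : (K j : ℝ) - K i = -1 := by
        have : ((K j - K i : ℤ) : ℝ) = ((-1 : ℤ) : ℝ) := by exact_mod_cast h
        push_cast at this; linarith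
      have hneg : x (π j) < x (π i) := by linarith [hKr, hc]
      exact ⟨hKeq, hmono.lt_iff_lt.mp hneg⟩
  -- the strictly increasing integer function
  set F : Fin (m'+1) → ℤ := fun i => (π i : ℤ) - (m'+1) * K i with hFdef
  have hF1 : ∀ i j : Fin (m'+1), i < j → 1 ≤ F j - F i ∧ F j - F i ≤ (m'+1 : ℤ) - 1 := by
    intro i j hij
    have hπjm : (π j : ℤ) < m'+1 := by exact_mod_cast (π j).is_lt
    have hπim : (π i : ℤ) < m'+1 := by exact_mod_cast (π i).is_lt
    have hπj0 : (0:ℤ) ≤ (π j : ℤ) := Int.natCast_nonneg _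
    have hπi0 : (0:ℤ) ≤ (π i : ℤ) := Int.natCast_nonneg _
    rcases hpair i j hij with ⟨hKeq, hlt⟩ | ⟨hKeq, hlt⟩
    · have hlt' : (π i : ℤ) < (π j : ℤ) := by exact_mod_cast hlt
      simp only [hFdef, hKeq]
      constructor <;> [linarith; linarith]
    · have hlt' : (π j : ℤ) < (π i : ℤ) := by exact_mod_cast hlt
      simp only [hFdef, hKeq]
      constructor <;> [nlinarith; nlinarith]
  have hchain : ∀ d : ℕ, ∀ i j : Fin (m'+1), (i : ℕ) + d = (j : ℕ) → (d : ℤ) ≤ F j - F i := by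
    intro d
    induction d with
    | zero =>
        intro i j hij
        have : i = j := Fin.ext (by omega)
        simp [this]
    | succ d ih =>
        intro i j hij
        have hwlt : (i : ℕ) + d < m'+1 := by have := j.is_lt; omega
        set w : Fin (m'+1) := ⟨(i : ℕ) + d, hwlt⟩ with hwdef
        have h1 : (d : ℤ) ≤ F w - F i := ih i w rfl
        have h2 : 1 ≤ F j - F w := (hF1 w j (by simp only [Fin.lt_def, hwdef]; omega)).1
        push_cast
        linarith
  have hFeq : ∀ i : Fin (m'+1), F i - F 0 = (i : ℕ) := by
    intro i
    rcases Nat.eq_zero_or_pos (i : ℕ) with h0 | h0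
    · have : i = 0 := Fin.ext h0
      simp [this]
    · have hlow : ((i : ℕ) : ℤ) ≤ F i - F 0 := hchain (i : ℕ) 0 i (by simp)
      have hiLe : (i : ℕ) ≤ m' := by have := i.is_lt; omega
      have hup1 : ((m' - (i : ℕ) : ℕ) : ℤ) ≤ F (Fin.last m') - F i :=
        hchain (m' - (i : ℕ)) i (Fin.last m') (by simp [Fin.last]; omega)
      have hm'0 : 0 < m' := by
        rcases Nat.eq_zero_or_pos m' with h | h
        · exfalso; have := i.is_lt; omega
        · exact h
      have hup2 : F (Fin.last m') - F 0 ≤ (m'+1 : ℤ) - 1 :=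
        (hF1 0 (Fin.last m') (by simp [Fin.lt_def, Fin.last]; omega)).2
      have hcast : ((m' - (i : ℕ) : ℕ) : ℤ) = (m' : ℤ) - (i : ℕ) := by
        push_cast [Nat.cast_sub hiLe]; ring
      omega
  -- conclude
  refine ⟨π 0, ?_⟩
  intro i
  have hKi : K i = K 0 ∨ K i = K 0 - 1 := by
    rcases Nat.eq_zero_or_pos (i : ℕ) with h0 | h0
    · left; have : i = 0 := Fin.ext h0; rw [this]
    · rcases hpair 0 i (by rw [Fin.lt_def, Fin.val_zero]; omega) with ⟨h, _⟩ | ⟨h, _⟩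
      · left; exact h
      · right; exact h
  have hFi' : (π i : ℤ) - (m'+1) * K i - ((π 0 : ℤ) - (m'+1) * K 0) = (i : ℕ) := hFeq i
  have hval : (i + π 0 : Fin (m'+1)) = π i := by
    apply Fin.ext
    have hadd : ((i + π 0 : Fin (m'+1)) : ℕ) = ((i : ℕ) + (π 0 : ℕ)) % (m'+1) := by
      simp [Fin.add_def]
    rw [hadd]
    have hπim : (π i : ℕ) < m'+1 := (π i).is_lt
    rcases hKi with h | h
    · have hz : (π i : ℤ) = (π 0 : ℤ) + (i : ℕ) := by rw [h] at hFi'; linarith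
      have hnat : (π i : ℕ) = (π 0 : ℕ) + (i : ℕ) := by exact_mod_cast hz
      have hlt : (i : ℕ) + (π 0 : ℕ) < m'+1 := by omega
      rw [Nat.mod_eq_of_lt hlt]
      omega
    · have hz : (π i : ℤ) + (m'+1) = (π 0 : ℤ) + (i : ℕ) := by
        rw [h] at hFi'; linarith
      have hnat : (π i : ℕ) + (m'+1) = (π 0 : ℕ) + (i : ℕ) := by exact_mod_cast hz
      have heq : (i : ℕ) + (π 0 : ℕ) = (π i : ℕ) + (m'+1) := by omega
      rw [heq, Nat.add_mod_right, Nat.mod_eq_of_lt hπim]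
  rw [hval]
  exact (hπ i).symm
end

section
/- Let σ_3 : ℝ/ℤ → ℝ/ℤ be x ↦ 3x, let a ∈ ℝ/ℤ, and let Π be the set of all points whose entire forward σ_3-orbit is contained in the closed arc L complementary to the open arc (a, a+1/3). If the orbit of the point σ_3(a) is entirely contained in the open arc int(L) (the regular critical case), then Π has no isolated points; together with being closed, bounded, and (as shown separately) totally disconnected, Π is a Cantor set. -/
/- Auxiliary development for the regular critical case of the tripling map. -/

open Set

namespace RegPerfect

noncomputable section

abbrev S1 := AddCircle (1:ℝ)

variable (a : ℝ)

/-- The closed arc `L` (complement of the hole). -/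
def Lset : Set S1 := (fun r : ℝ => (r : S1)) '' Set.Icc (a - 2/3) a

/-- The open arc (interior of `L`). -/
def Lint : Set S1 := (fun r : ℝ => (r : S1)) '' Set.Ioo (a - 2/3) a

/-- The tripling map. -/
def sig : S1 → S1 := fun z => 3 • z

/-- The invariant set `Π`. -/
def PiSet : Set S1 := {x | ∀ n : ℕ, sig^[n] x ∈ Lset a}

def Good (t : ℝ) : Prop := (t : S1) ∈ PiSet a

/-- The orbit hypothesis, in multiplicative form. -/
def Horb : Prop := ∀ n : ℕ, ((3^(n+1) * a : ℝ) : S1) ∈ Lint a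

variable {a}

lemma coe_eq_coe_iff {s t : ℝ} : ((s : S1) = t) ↔ ∃ m : ℤ, s - t = m := by
  rw [QuotientAddGroup.eq]
  constructor
  · rintro h
    rw [AddSubgroup.mem_zmultiples_iff] at h
    obtain ⟨k, hk⟩ := h
    exact ⟨-k, by push_cast [zsmul_eq_mul] at hk ⊢; linarith⟩
  · rintro ⟨m, hm⟩
    rw [AddSubgroup.mem_zmultiples_iff]
    refine ⟨-m, ?_⟩
    rw [zsmul_eq_mul]
    push_cast
    linarith

lemma coe_eq_coe_of_int {s t : ℝ} (m : ℤ) (h : s - t = m) : (s : S1) = t :=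
  coe_eq_coe_iff.2 ⟨m, h⟩

lemma sig_coe (t : ℝ) : sig (t : S1) = ((3 * t : ℝ) : S1) := by
  show (3:ℕ) • (t : S1) = _
  have h : ((3:ℕ) • t : ℝ) = 3 * t := by push_cast [nsmul_eq_mul]; ring
  rw [← h]; rfl

lemma iter_sig_coe (n : ℕ) (t : ℝ) : sig^[n] (t : S1) = ((3^n * t : ℝ) : S1) := by
  induction n with
  | zero => simp
  | succ n ih => rw [Function.iterate_succ_apply', ih, sig_coe]; congr 1; ring

lemma mem_Lset_of_Icc {t : ℝ} (h : t ∈ Set.Icc (a - 2/3) a) : (t : S1) ∈ Lset a := ⟨t, h, rfl⟩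

lemma sig_mem_PiSet {x : S1} (hx : x ∈ PiSet a) : sig x ∈ PiSet a := by
  intro n; rw [← Function.iterate_succ_apply]; exact hx (n+1)

lemma mem_PiSet_of_sig {x : S1} (hL : x ∈ Lset a) (hx : sig x ∈ PiSet a) : x ∈ PiSet a := by
  intro n
  cases n with
  | zero => exact hL
  | succ n => rw [Function.iterate_succ_apply]; exact hx n

lemma Lint_subset_Lset : Lint a ⊆ Lset a := Set.image_mono Set.Ioo_subset_Icc_self

lemma pow_a_mem_L (horb : Horb a) (n : ℕ) (hn : 1 ≤ n) : ((3^n * a : ℝ) : S1) ∈ Lset a := by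
  obtain ⟨m, rfl⟩ := Nat.exists_eq_add_of_le hn
  rw [Nat.add_comm 1 m]
  exact Lint_subset_Lset (horb m)

lemma good_a (horb : Horb a) : Good a a := by
  intro n
  rw [iter_sig_coe]
  cases n with
  | zero =>
      simp only [pow_zero, one_mul]
      exact mem_Lset_of_Icc ⟨by linarith, le_refl a⟩
  | succ n => exact pow_a_mem_L horb (n+1) (Nat.succ_le_succ (Nat.zero_le n))

lemma good_left (horb : Horb a) : Good a (a - 2/3) := by
  intro n
  rw [iter_sig_coe]
  cases n with
  | zero =>
      simp only [pow_zero, one_mul]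
      exact mem_Lset_of_Icc ⟨le_refl _, by linarith⟩
  | succ n =>
      have he : ((3^(n+1) * (a - 2/3) : ℝ) : S1) = ((3^(n+1) * a : ℝ) : S1) := by
        refine coe_eq_coe_of_int (-(2 * 3^n)) ?_
        push_cast; ring
      rw [he]
      exact pow_a_mem_L horb (n+1) (Nat.succ_le_succ (Nat.zero_le n))

lemma good_mid (horb : Horb a) : Good a (a - 1/3) := by
  intro n
  rw [iter_sig_coe]
  cases n with
  | zero =>
      simp only [pow_zero, one_mul]
      exact mem_Lset_of_Icc ⟨by linarith, by linarith⟩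
  | succ n =>
      have he : ((3^(n+1) * (a - 1/3) : ℝ) : S1) = ((3^(n+1) * a : ℝ) : S1) := by
        refine coe_eq_coe_of_int (-(3^n)) ?_
        push_cast; ring
      rw [he]
      exact pow_a_mem_L horb (n+1) (Nat.succ_le_succ (Nat.zero_le n))

lemma a_not_mem_Lint : ((a : ℝ) : S1) ∉ Lint a := by
  rintro ⟨t, ⟨ht1, ht2⟩, hco⟩
  obtain ⟨m, hm⟩ := coe_eq_coe_iff.1 hco
  have hm0 : m < 0 := by exact_mod_cast show (m:ℝ) < 0 by linarith
  have hm1 : (-1:ℤ) < m := by exact_mod_cast show (-1:ℝ) < m by linarith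
  omega

lemma left_not_mem_Lint : (((a - 2/3 : ℝ)) : S1) ∉ Lint a := by
  rintro ⟨t, ⟨ht1, ht2⟩, hco⟩
  obtain ⟨m, hm⟩ := coe_eq_coe_iff.1 hco
  have hm0 : 0 < m := by exact_mod_cast show (0:ℝ) < m by linarith
  have hm1 : m < 1 := by exact_mod_cast show (m:ℝ) < 1 by linarith
  omega

lemma coe_pow_mul {s t : ℝ} (j : ℕ) (h : (s : S1) = t) :
    ((3^j * s : ℝ) : S1) = ((3^j * t : ℝ) : S1) := by
  obtain ⟨m, hm⟩ := coe_eq_coe_iff.1 h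
  refine coe_eq_coe_of_int (3^j * m) ?_
  have e : 3^j * s - 3^j * t = 3^j * (s - t) := by ring
  rw [e, hm]
  push_cast
  ring

lemma coe_pow_shift (k : ℕ) (hk : 1 ≤ k) :
    ((3^k * (a - 2/3) : ℝ) : S1) = ((3^k * a : ℝ) : S1) := by
  obtain ⟨m, rfl⟩ := Nat.exists_eq_add_of_le hk
  refine coe_eq_coe_of_int (-(2 * 3^m)) ?_
  push_cast
  rw [Nat.add_comm 1 m]
  rw [pow_succ]
  ring

/-- The gap alternative: the pair eventually maps exactly onto the closure of the hole. -/
def GapPair (α β : ℝ) : Prop :=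
  ∃ k : ℕ, ((3^(k+1) * α : ℝ) : S1) = ((a : ℝ) : S1) ∧
    ((3^(k+1) * β : ℝ) : S1) = ((a - 2/3 : ℝ) : S1)

/-- Core density lemma: between any two points of `Π` (given by representatives in
`[a-2/3, a]`) there is another point of `Π`, unless the pair is a gap pair. -/
lemma density (horb : Horb a) :
    ∀ n : ℕ, ∀ α β : ℝ, Good a α → Good a β →
      a - 2/3 ≤ α → β ≤ a → α < β → 2/3 < 3^n * (β - α) →
      (∃ W, α < W ∧ W < β ∧ Good a W) ∨ GapPair (a := a) α β := by
  intro n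
  induction n with
  | zero =>
      intro α β _ _ h1 h2 h3 hbig
      rw [pow_zero, one_mul] at hbig
      linarith
  | succ n ih =>
      intro α β hGα hGβ h1 h2 h3 hbig
      by_cases hmid : α < a - 1/3 ∧ a - 1/3 < β
      · exact Or.inl ⟨a - 1/3, hmid.1, hmid.2, good_mid horb⟩
      -- the pair lies in a single closed window, so β - α ≤ 1/3
      have hwin : β - α ≤ 1/3 := by
        rcases not_and_or.1 hmid with h | h
        · push_neg at h; linarith
        · push_neg at h; linarith
      -- representatives of 3α and 3β in the fundamental interval
      have hα1 := hGα 1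
      rw [iter_sig_coe] at hα1
      obtain ⟨rα, hrα, hcoα⟩ := hα1
      obtain ⟨mα', hmα'⟩ := coe_eq_coe_iff.1 hcoα
      set mα : ℤ := -mα' with hmαdef
      have hα3 : 3 * α = rα + mα := by
        have e : (3:ℝ)^1 * α = 3 * α := by ring
        push_cast [hmαdef]
        push_cast [e] at hmα'
        linarith
      have hβ1 := hGβ 1
      rw [iter_sig_coe] at hβ1
      obtain ⟨rβ, hrβ, hcoβ⟩ := hβ1
      obtain ⟨mβ', hmβ'⟩ := coe_eq_coe_iff.1 hcoβ
      set mβ : ℤ := -mβ' with hmβdef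
      have hβ3 : 3 * β = rβ + mβ := by
        have e : (3:ℝ)^1 * β = 3 * β := by ring
        push_cast [hmβdef]
        push_cast [e] at hmβ'
        linarith
      obtain ⟨hrα1, hrα2⟩ := hrα
      obtain ⟨hrβ1, hrβ2⟩ := hrβ
      -- mβ - mα ∈ {0, 1}
      have hj : mβ - mα = 0 ∨ mβ - mα = 1 := by
        have e1 : ((mβ - mα : ℤ) : ℝ) = 3*(β - α) - (rβ - rα) := by
          push_cast; linarith
        have b1 : (-1 : ℝ) < ((mβ - mα : ℤ) : ℝ) := by rw [e1]; linarith
        have b2 : ((mβ - mα : ℤ) : ℝ) < 2 := by rw [e1]; linarith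
        have a1 : (-1:ℤ) < mβ - mα := by exact_mod_cast b1
        have a2 : mβ - mα < 2 := by exact_mod_cast b2
        omega
      -- the representatives are again points of Π
      have hGrα : Good a rα := by
        show (rα : S1) ∈ PiSet a
        rw [show ((rα : ℝ) : S1) = ((3^1 * α : ℝ) : S1) from hcoα]
        have e : ((3^1 * α : ℝ) : S1) = sig ((α : ℝ) : S1) := by
          rw [sig_coe]; norm_num
        rw [e]
        exact sig_mem_PiSet hGα
      have hGrβ : Good a rβ := by
        show (rβ : S1) ∈ PiSet a
        rw [show ((rβ : ℝ) : S1) = ((3^1 * β : ℝ) : S1) from hcoβ]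
        have e : ((3^1 * β : ℝ) : S1) = sig ((β : ℝ) : S1) := by
          rw [sig_coe]; norm_num
        rw [e]
        exact sig_mem_PiSet hGβ
      rcases hj with hj0 | hj1
      · -- clean case: the image interval does not wrap; recurse and pull back
        have hmm : (mβ : ℝ) = mα := by
          have : mβ = mα := by omega
          exact_mod_cast this
        have hrr : rβ - rα = 3 * (β - α) := by linarith
        have hlt : rα < rβ := by nlinarith
        have hbig' : 2/3 < 3^n * (rβ - rα) := by
          rw [hrr]
          calc (2:ℝ)/3 < 3^(n+1) * (β - α) := hbig
          _ = 3^n * (3 * (β - α)) := by ring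
        rcases ih rα rβ hGrα hGrβ hrα1 hrβ2 hlt hbig' with ⟨W', hW1, hW2, hGW'⟩ | ⟨k, hk1, hk2⟩
        · refine Or.inl ⟨(W' + mα)/3, by linarith, by linarith, ?_⟩
          have hWIcc : (W' + (mα:ℝ))/3 ∈ Set.Icc (a - 2/3) a :=
            ⟨by linarith, by linarith⟩
          refine mem_PiSet_of_sig (mem_Lset_of_Icc hWIcc) ?_
          rw [sig_coe]
          have e : ((3 * ((W' + (mα:ℝ))/3) : ℝ) : S1) = ((W' : ℝ) : S1) := by
            refine coe_eq_coe_of_int mα ?_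
            ring
          rw [e]
          exact hGW'
        · refine Or.inr ⟨k + 1, ?_, ?_⟩
          · have e : ((3^(k+1+1) * α : ℝ) : S1) = ((3^(k+1) * rα : ℝ) : S1) := by
              refine coe_eq_coe_of_int (3^(k+1) * mα) ?_
              push_cast
              calc 3^(k+1+1) * α - 3^(k+1) * rα = 3^(k+1) * (3*α - rα) := by ring
              _ = 3^(k+1) * (mα : ℝ) := by rw [hα3]; ring
            rw [e]; exact hk1
          · have e : ((3^(k+1+1) * β : ℝ) : S1) = ((3^(k+1) * rβ : ℝ) : S1) := by
              refine coe_eq_coe_of_int (3^(k+1) * mβ) ?_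
              push_cast
              calc 3^(k+1+1) * β - 3^(k+1) * rβ = 3^(k+1) * (3*β - rβ) := by ring
              _ = 3^(k+1) * (mβ : ℝ) := by rw [hβ3]; ring
            rw [e]; exact hk2
      · -- wrap case: the image interval crosses the hole
        have hmm : (mβ : ℝ) = mα + 1 := by
          have : mβ = mα + 1 := by omega
          exact_mod_cast this
        set Wa : ℝ := (a + mα)/3 with hWadef
        set Wb : ℝ := (a + 1/3 + mα)/3 with hWbdef
        have hαWa : α ≤ Wa := by rw [hWadef]; linarith
        have hWbβ : Wb ≤ β := by rw [hWbdef]; linarith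
        have hab : Wa + 1/9 = Wb := by rw [hWadef, hWbdef]; ring
        by_cases hc1 : α < Wa
        · refine Or.inl ⟨Wa, hc1, by linarith, ?_⟩
          refine mem_PiSet_of_sig (mem_Lset_of_Icc ⟨by linarith, by linarith⟩) ?_
          rw [sig_coe]
          have e : ((3 * Wa : ℝ) : S1) = ((a : ℝ) : S1) := by
            refine coe_eq_coe_of_int mα ?_
            rw [hWadef]; ring
          rw [e]
          exact good_a horb
        · have hαeq : α = Wa := le_antisymm hαWa (not_lt.1 hc1)
          by_cases hc2 : Wb < β
          · refine Or.inl ⟨Wb, by linarith, hc2, ?_⟩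
            refine mem_PiSet_of_sig (mem_Lset_of_Icc ⟨by linarith, by linarith⟩) ?_
            rw [sig_coe]
            have e : ((3 * Wb : ℝ) : S1) = ((a - 2/3 : ℝ) : S1) := by
              refine coe_eq_coe_of_int (mα + 1) ?_
              rw [hWbdef]; push_cast; ring
            rw [e]
            exact good_left horb
          · have hβeq : β = Wb := le_antisymm (not_lt.1 hc2) hWbβ
            refine Or.inr ⟨0, ?_, ?_⟩
            · refine coe_eq_coe_of_int mα ?_
              rw [hαeq, hWadef]; push_cast; ring
            · refine coe_eq_coe_of_int (mα + 1) ?_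
              rw [hβeq, hWbdef]; push_cast; ring

/- Topological part -/

lemma continuous_coe : Continuous (fun r : ℝ => (r : S1)) := AddCircle.continuous_mk' 1

lemma isClosed_Lset : IsClosed (Lset a) :=
  (isCompact_Icc.image continuous_coe).isClosed

lemma continuous_sig : Continuous (sig : S1 → S1) := continuous_nsmul 3

lemma isClosed_PiSet : IsClosed (PiSet a) := by
  have e : PiSet a = ⋂ n : ℕ, (sig^[n]) ⁻¹' (Lset a) := by
    ext x; simp [PiSet, Set.mem_iInter]
  rw [e]
  exact isClosed_iInter fun n => (isClosed_Lset).preimage (continuous_sig.iterate n)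

lemma isClosed_GoodSet : IsClosed {t : ℝ | Good a t} :=
  isClosed_PiSet.preimage continuous_coe

/-- No point of `Π` is "gap-adjacent" on both sides. -/
lemma perfect_PiSet (horb : Horb a) : Perfect (PiSet a) := by
  refine ⟨isClosed_PiSet, ?_⟩
  intro x hx
  rw [accPt_iff_nhds]
  intro U hU
  -- a representative of x
  have h0 := hx 0
  rw [Function.iterate_zero, id] at h0
  obtain ⟨X, hXIcc, hXx0⟩ := h0
  obtain ⟨hX1, hX2⟩ := hXIcc
  have hXx : ((X : ℝ) : S1) = x := hXx0
  have hGX : Good a X := by show (X : S1) ∈ PiSet a; rw [hXx]; exact hx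
  -- one-sided approach
  have happ : (∀ ε : ℝ, 0 < ε → ∃ W, X < W ∧ W < X + ε ∧ Good a W) ∨
      (∀ ε : ℝ, 0 < ε → ∃ W, X - ε < W ∧ W < X ∧ Good a W) := by
    by_contra hcon
    push_neg at hcon
    obtain ⟨⟨εR, hεR, hR⟩, ⟨εL, hεL, hL⟩⟩ := hcon
    -- right side analysis
    have hRgap : X = a ∨ ∃ k : ℕ, ((3^(k+1) * X : ℝ) : S1) = ((a : ℝ) : S1) := by
      by_cases hXa : X = a
      · exact Or.inl hXa
      right
      have hXa' : X < a := lt_of_le_of_ne hX2 hXa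
      set c : ℝ := X + (min εR (a - X))/2 with hcdef
      have hc1 : X < c := by
        rw [hcdef]
        have : 0 < min εR (a - X) := lt_min hεR (by linarith)
        linarith
      have hc2 : c < X + εR := by
        rw [hcdef]
        have h5 : min εR (a - X) ≤ εR := min_le_left _ _
        linarith
      have hc3 : c ≤ a := by
        rw [hcdef]
        have h5 : min εR (a - X) ≤ a - X := min_le_right _ _
        linarith
      set S : Set ℝ := {t : ℝ | Good a t} ∩ Set.Icc c a with hSdef
      have hSclosed : IsClosed S := isClosed_GoodSet.inter isClosed_Icc
      have hSne : S.Nonempty := ⟨a, good_a horb, hc3, le_refl a⟩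
      have hSbdd : BddBelow S := (bddBelow_Icc).mono Set.inter_subset_right
      set m : ℝ := sInf S with hmdef
      have hmS : m ∈ S := hSclosed.csInf_mem hSne hSbdd
      obtain ⟨hGm, hmc, hma⟩ := hmS
      have hXm : X < m := lt_of_lt_of_le hc1 hmc
      -- there is no Good point strictly between X and m
      have hnone : ∀ W, X < W → W < m → ¬ Good a W := by
        intro W hW1 hW2 hGW
        by_cases hWc : W ≤ c
        · exact absurd hGW (hR W hW1 (lt_of_le_of_lt hWc hc2))
        · push_neg at hWc
          have : m ≤ W := csInf_le hSbdd ⟨hGW, le_of_lt hWc, le_trans (le_of_lt hW2) hma⟩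
          linarith
      -- apply the density lemma
      obtain ⟨n, hn⟩ := pow_unbounded_of_one_lt ((2/3)/(m - X)) (by norm_num : (1:ℝ) < 3)
      have hbig : 2/3 < 3^n * (m - X) := by
        rw [div_lt_iff₀ (by linarith : (0:ℝ) < m - X)] at hn
        linarith
      rcases density horb n X m hGX hGm hX1 hma hXm hbig with ⟨W, hW1, hW2, hGW⟩ | ⟨k, hk1, _⟩
      · exact absurd hGW (hnone W hW1 hW2)
      · exact ⟨k, hk1⟩
    -- left side analysis
    have hLgap : X = a - 2/3 ∨ ∃ k : ℕ, ((3^(k+1) * X : ℝ) : S1) = ((a - 2/3 : ℝ) : S1) := by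
      by_cases hXa : X = a - 2/3
      · exact Or.inl hXa
      right
      have hXa' : a - 2/3 < X := lt_of_le_of_ne hX1 (Ne.symm hXa)
      set c : ℝ := X - (min εL (X - (a - 2/3)))/2 with hcdef
      have hc1 : c < X := by
        rw [hcdef]
        have : 0 < min εL (X - (a - 2/3)) := lt_min hεL (by linarith)
        linarith
      have hc2 : X - εL < c := by
        rw [hcdef]
        have h5 : min εL (X - (a - 2/3)) ≤ εL := min_le_left _ _
        linarith
      have hc3 : a - 2/3 ≤ c := by
        rw [hcdef]
        have h5 : min εL (X - (a - 2/3)) ≤ X - (a - 2/3) := min_le_right _ _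
        linarith
      set S : Set ℝ := {t : ℝ | Good a t} ∩ Set.Icc (a - 2/3) c with hSdef
      have hSclosed : IsClosed S := isClosed_GoodSet.inter isClosed_Icc
      have hSne : S.Nonempty := ⟨a - 2/3, good_left horb, le_refl _, hc3⟩
      have hSbdd : BddAbove S := (bddAbove_Icc).mono Set.inter_subset_right
      set m : ℝ := sSup S with hmdef
      have hmS : m ∈ S := hSclosed.csSup_mem hSne hSbdd
      obtain ⟨hGm, hm1, hm2⟩ := hmS
      have hmX : m < X := lt_of_le_of_lt hm2 hc1
      have hnone : ∀ W, m < W → W < X → ¬ Good a W := by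
        intro W hW1 hW2 hGW
        by_cases hWc : c ≤ W
        · exact absurd hGW (hL W (lt_of_lt_of_le hc2 hWc) hW2)
        · push_neg at hWc
          have : W ≤ m := le_csSup hSbdd ⟨hGW, le_trans hm1 (le_of_lt hW1), le_of_lt hWc⟩
          linarith
      obtain ⟨n, hn⟩ := pow_unbounded_of_one_lt ((2/3)/(X - m)) (by norm_num : (1:ℝ) < 3)
      have hbig : 2/3 < 3^n * (X - m) := by
        rw [div_lt_iff₀ (by linarith : (0:ℝ) < X - m)] at hn
        linarith
      rcases density horb n m X hGm hGX hm1 hX2 hmX hbig with ⟨W, hW1, hW2, hGW⟩ | ⟨k, _, hk2⟩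
      · exact absurd hGW (hnone W hW1 hW2)
      · exact ⟨k, hk2⟩
    -- derive a contradiction from the two gap facts
    rcases hRgap with hXa | ⟨k1, hk1⟩
    · rcases hLgap with hXl | ⟨k2, hk2⟩
      · rw [hXa] at hXl; linarith
      · rw [hXa] at hk2
        exact left_not_mem_Lint (hk2 ▸ horb k2)
    · rcases hLgap with hXl | ⟨k2, hk2⟩
      · rw [hXl] at hk1
        rw [coe_pow_shift (k1+1) (Nat.succ_le_succ (Nat.zero_le k1))] at hk1
        exact a_not_mem_Lint (hk1 ▸ horb k1)
      · rcases lt_trichotomy k1 k2 with hlt | heq | hgt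
        · -- k1 < k2
          set j : ℕ := k2 - k1 with hjdef
          have hj1 : 1 ≤ j := by omega
          have e1 : (3:ℝ)^(k2+1) * X = 3^j * (3^(k1+1) * X) := by
            rw [← mul_assoc, ← pow_add]
            congr 2
            omega
          have e2 : ((3^(k2+1) * X : ℝ) : S1) = ((3^j * a : ℝ) : S1) := by
            rw [e1]
            exact coe_pow_mul j hk1
          rw [hk2] at e2
          obtain ⟨jm, hjm⟩ := Nat.exists_eq_add_of_le hj1
          rw [hjm, Nat.add_comm 1 jm] at e2
          exact left_not_mem_Lint (e2 ▸ horb jm)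
        · rw [heq] at hk1
          rw [hk1] at hk2
          obtain ⟨m, hm⟩ := coe_eq_coe_iff.1 hk2
          have hm0 : 0 < m := by exact_mod_cast show (0:ℝ) < m by linarith
          have hm1 : m < 1 := by exact_mod_cast show (m:ℝ) < 1 by linarith
          omega
        · -- k2 < k1
          set j : ℕ := k1 - k2 with hjdef
          have hj1 : 1 ≤ j := by omega
          have e1 : (3:ℝ)^(k1+1) * X = 3^j * (3^(k2+1) * X) := by
            rw [← mul_assoc, ← pow_add]
            congr 2
            omega
          have e2 : ((3^(k1+1) * X : ℝ) : S1) = ((3^j * (a - 2/3) : ℝ) : S1) := by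
            rw [e1]
            exact coe_pow_mul j hk2
          rw [hk1, coe_pow_shift j hj1] at e2
          obtain ⟨jm, hjm⟩ := Nat.exists_eq_add_of_le hj1
          rw [hjm, Nat.add_comm 1 jm] at e2
          exact a_not_mem_Lint (e2 ▸ horb jm)
  -- conclude: produce a nearby point of Π distinct from x
  have hpre : (fun t : ℝ => (t : S1)) ⁻¹' U ∈ nhds X := by
    apply continuous_coe.continuousAt.preimage_mem_nhds
    rw [hXx]
    exact hU
  obtain ⟨δ, hδ, hball⟩ := Metric.mem_nhds_iff.1 hpre
  rcases happ with hra | hla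
  · obtain ⟨W, hW1, hW2, hGW⟩ := hra (min δ (1/2)) (lt_min hδ (by norm_num))
    refine ⟨(W : S1), ⟨?_, hGW⟩, ?_⟩
    · apply hball
      rw [Metric.mem_ball, Real.dist_eq, abs_lt]
      have h5 : min δ (1/2) ≤ δ := min_le_left _ _
      constructor <;> linarith
    · rw [← hXx]
      intro hWX
      obtain ⟨m, hm⟩ := coe_eq_coe_iff.1 hWX
      have h5 : min δ (1/2) ≤ 1/2 := min_le_right _ _
      have hm0 : 0 < m := by exact_mod_cast show (0:ℝ) < m by linarith
      have hm1 : m < 1 := by exact_mod_cast show (m:ℝ) < 1 by linarith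
      omega
  · obtain ⟨W, hW1, hW2, hGW⟩ := hla (min δ (1/2)) (lt_min hδ (by norm_num))
    refine ⟨(W : S1), ⟨?_, hGW⟩, ?_⟩
    · apply hball
      rw [Metric.mem_ball, Real.dist_eq, abs_lt]
      have h5 : min δ (1/2) ≤ δ := min_le_left _ _
      constructor <;> linarith
    · rw [← hXx]
      intro hWX
      obtain ⟨m, hm⟩ := coe_eq_coe_iff.1 hWX
      have h5 : min δ (1/2) ≤ 1/2 := min_le_right _ _
      have hm0 : m < 0 := by exact_mod_cast show (m:ℝ) < 0 by linarith
      have hm1 : (-1:ℤ) < m := by exact_mod_cast show (-1:ℝ) < m by linarith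
      omega

end

end RegPerfect

/-- Regular critical case: if the entire forward orbit of `σ_3(a)` stays in the
interior of the closed arc `L` complementary to the hole `(a, a+1/3)`, then the set
`Π` of points whose full forward orbit lies in `L` is perfect (closed with no
isolated points). -/
theorem regular_critical_pi_perfect (a : ℝ)
    (horb : ∀ n : ℕ, (3:ℕ)^(n+1) • ((a : ℝ) : AddCircle (1:ℝ)) ∈
      (fun r : ℝ => (r : AddCircle (1:ℝ))) '' Set.Ioo (a - 2/3) a) :
    Perfect {x : AddCircle (1:ℝ) | ∀ n : ℕ,
      (fun z : AddCircle (1:ℝ) => 3 • z)^[n] x ∈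
        (fun r : ℝ => (r : AddCircle (1:ℝ))) '' Set.Icc (a - 2/3) a} := by
  have horb' : RegPerfect.Horb a := by
    intro n
    have h := horb n
    have e : (3:ℕ)^(n+1) • ((a : ℝ) : AddCircle (1:ℝ)) = ((3^(n+1) * a : ℝ) : AddCircle (1:ℝ)) := by
      have h2 : ((((3:ℕ)^(n+1)) • a : ℝ) : AddCircle (1:ℝ)) = (3:ℕ)^(n+1) • ((a:ℝ) : AddCircle (1:ℝ)) := rfl
      rw [← h2]
      congr 1
      norm_num
    rw [e] at h
    exact h
  exact RegPerfect.perfect_PiSet horb'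
end
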